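/- Let v₁, …, vₙ be distinct points in ℝᵈ with squared distance matrix V, and let U := V − J + I. Then U has at most one eigenvalue greater than 1, and at least n − d − 2 eigenvalues equal to 1 (counted with multiplicity). -/

import Mathlib

open Matrix


open Finset in
private lemma myrank_add {n : ℕ} (A B : Matrix (Fin n) (Fin n) ℝ) :
    (A + B).rank ≤ A.rank + B.rank := by
  rw [Matrix.rank, Matrix.rank, Matrix.rank, Matrix.mulVecLin_add]
  refine le_trans (Submodule.finrank_mono ?_) (Submodule.finrank_add_le_finrank_add_finrank _ _)
  rintro x ⟨y, rfl⟩
  exact Submodule.add_mem_sup ⟨y, rfl⟩ ⟨y, rfl⟩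

private lemma myrank_vmv {n : ℕ} (w u : Fin n → ℝ) : (Matrix.vecMulVec w u).rank ≤ 1 := by
  rw [Matrix.vecMulVec_eq Unit]
  exact le_trans (Matrix.rank_mul_le_left _ _)
    (le_trans (Matrix.rank_le_card_width _) (by simp))

theorem stmt3 (d n : ℕ) (v : Fin n → EuclideanSpace ℝ (Fin d))
    (hv : Function.Injective v)
    (V : Matrix (Fin n) (Fin n) ℝ) (hVdef : ∀ i j, V i j = ‖v i - v j‖ ^ 2)
    (U : Matrix (Fin n) (Fin n) ℝ)
    (hUdef : U = V - Matrix.of (fun _ _ => (1 : ℝ)) + 1)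
    (hU : U.IsHermitian) :
    (Finset.univ.filter fun i => 1 < hU.eigenvalues i).card ≤ 1 ∧
      n - d - 2 ≤ (Finset.univ.filter fun i => hU.eigenvalues i = 1).card := by
  classical
  set lam := hU.eigenvalues with hlam
  set b := hU.eigenvectorBasis with hb
  have hdot : ∀ i' j' : Fin n,
      dotProduct ⇑(b i') ⇑(b j') = if i' = j' then (1:ℝ) else 0 := by
    intro i' j'
    have h := hU.eigenvectorBasis.orthonormal
    rw [orthonormal_iff_ite] at h
    have := h i' j'
    simpa [PiLp.inner_apply, RCLike.inner_apply, dotProduct, starRingEnd_apply,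
      mul_comm] using this
  have hinner : ∀ i' j' : Fin n, (inner ℝ (v i') (v j') : ℝ) = ∑ k, v i' k * v j' k := by
    intro i' j'
    simp [PiLp.inner_apply, RCLike.inner_apply, starRingEnd_apply, mul_comm]
  constructor
  · -- at most one eigenvalue > 1
    rw [Finset.card_le_one]
    intro i hi j hj
    by_contra hij
    rw [Finset.mem_filter] at hi hj
    have hi1 : 1 < lam i := hi.2
    have hj1 : 1 < lam j := hj.2
    set s : ℝ := ∑ k, b i k with hs
    set t : ℝ := ∑ k, b j k with ht
    obtain ⟨α, β, hαβ, hsum0⟩ : ∃ α β : ℝ, 0 < α ^ 2 + β ^ 2 ∧ α * s + β * t = 0 := by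
      by_cases h : s = 0 ∧ t = 0
      · exact ⟨1, 0, by norm_num, by simp [h.1, h.2]⟩
      · refine ⟨t, -s, ?_, by ring⟩
        rcases not_and_or.mp h with h' | h'
        · have h2 : 0 < s ^ 2 := lt_of_le_of_ne (sq_nonneg s) (Ne.symm (pow_ne_zero _ h'))
          nlinarith [sq_nonneg t]
        · have h2 : 0 < t ^ 2 := lt_of_le_of_ne (sq_nonneg t) (Ne.symm (pow_ne_zero _ h'))
          nlinarith [sq_nonneg s]
    set x : Fin n → ℝ := α • ⇑(b i) + β • ⇑(b j) with hx
    have hsumx : ∑ k, x k = 0 := by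
      simp only [hx, Pi.add_apply, Pi.smul_apply, smul_eq_mul]
      rw [Finset.sum_add_distrib, ← Finset.mul_sum, ← Finset.mul_sum]
      exact hsum0
    have hUx : U *ᵥ x = (α * lam i) • ⇑(b i) + (β * lam j) • ⇑(b j) := by
      rw [hx, Matrix.mulVec_add, Matrix.mulVec_smul, Matrix.mulVec_smul,
        hU.mulVec_eigenvectorBasis, hU.mulVec_eigenvectorBasis, smul_smul, smul_smul]
    have E1 : dotProduct x (U *ᵥ x) = α ^ 2 * lam i + β ^ 2 * lam j := by
      rw [hUx, hx]
      simp only [add_dotProduct, dotProduct_add, smul_dotProduct,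
        dotProduct_smul, smul_eq_mul, hdot]
      have hji : ¬ j = i := fun h => hij h.symm
      simp only [hij, hji, if_true, if_false, ite_true, ite_false, eq_self_iff_true]
      ring
    have E2 : dotProduct x x = α ^ 2 + β ^ 2 := by
      rw [hx]
      simp only [add_dotProduct, dotProduct_add, smul_dotProduct,
        dotProduct_smul, smul_eq_mul, hdot]
      have hji : ¬ j = i := fun h => hij h.symm
      simp only [hij, hji, if_true, if_false, ite_true, ite_false, eq_self_iff_true]
      ring
    have E3 : dotProduct x (U *ᵥ x)
        = dotProduct x (V *ᵥ x) - (∑ k, x k) * (∑ k, x k) + dotProduct x x := by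
      have hJ : dotProduct x ((Matrix.of fun _ _ => (1:ℝ)) *ᵥ x)
          = (∑ k, x k) * (∑ k, x k) := by
        simp only [dotProduct, Matrix.mulVec, Matrix.of_apply, one_mul]
        rw [Finset.sum_mul]
      rw [hUdef, Matrix.add_mulVec, Matrix.sub_mulVec, Matrix.one_mulVec,
        dotProduct_add, dotProduct_sub, hJ]
    set w : EuclideanSpace ℝ (Fin d) := ∑ k, x k • v k with hw
    have hwinner : (inner ℝ (w) (w) : ℝ) = ∑ k, ∑ l, x k * x l * (inner ℝ (v k) (v l) : ℝ) := by
      rw [hw, sum_inner]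
      refine Finset.sum_congr rfl fun k _ => ?_
      rw [inner_sum]
      refine Finset.sum_congr rfl fun l _ => ?_
      rw [real_inner_smul_left, real_inner_smul_right]
      ring
    have E4 : dotProduct x (V *ᵥ x) = -2 * (inner ℝ (w) (w) : ℝ) := by
      have expand : ∀ k l, x k * (V k l * x l)
          = x k * ‖v k‖ ^ 2 * x l + (x k * x l * ‖v l‖ ^ 2)
            - 2 * (x k * x l * (inner ℝ (v k) (v l) : ℝ)) := by
        intro k l
        rw [hVdef, norm_sub_sq_real]
        ring
      have : dotProduct x (V *ᵥ x) = ∑ k, ∑ l, x k * (V k l * x l) := by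
        simp [dotProduct, Matrix.mulVec, Finset.mul_sum]
      rw [this]
      simp_rw [expand]
      rw [hwinner]
      simp only [Finset.sum_sub_distrib, Finset.sum_add_distrib]
      have t1 : ∑ k, ∑ l, x k * ‖v k‖ ^ 2 * x l = 0 := by
        simp_rw [← Finset.mul_sum]
        simp [hsumx]
      have t2 : ∑ k : Fin n, ∑ l, x k * x l * ‖v l‖ ^ 2 = 0 := by
        rw [Finset.sum_comm]
        refine Finset.sum_eq_zero fun l _ => ?_
        simp_rw [mul_comm (x _) (x l), mul_assoc, ← Finset.mul_sum]
        rw [show (∑ k, x k * ‖v l‖ ^ 2) = (∑ k, x k) * ‖v l‖ ^ 2 by rw [Finset.sum_mul]]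
        simp [hsumx]
      rw [t1, t2]
      simp only [← Finset.mul_sum]
      ring
    have hww : (0:ℝ) ≤ (inner ℝ (w) (w) : ℝ) := real_inner_self_nonneg
    have key : α ^ 2 * lam i + β ^ 2 * lam j ≤ α ^ 2 + β ^ 2 := by
      rw [← E1, E3, E4, hsumx, E2]
      nlinarith
    have h1 : α ^ 2 * (lam i - 1) + β ^ 2 * (lam j - 1) ≤ 0 := by nlinarith
    have h2 : 0 ≤ α ^ 2 * (lam i - 1) := mul_nonneg (sq_nonneg _) (by linarith)
    have h3 : 0 ≤ β ^ 2 * (lam j - 1) := mul_nonneg (sq_nonneg _) (by linarith)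
    have hα0 : α ^ 2 = 0 := by
      have := le_antisymm (by linarith) h2
      rcases mul_eq_zero.mp this with h | h
      · exact h
      · linarith
    have hβ0 : β ^ 2 = 0 := by
      have := le_antisymm (by linarith) h3
      rcases mul_eq_zero.mp this with h | h
      · exact h
      · linarith
    linarith
  · -- at least n - d - 2 eigenvalues equal to 1
    set S : Finset (Fin n) := Finset.univ.filter fun i => lam i = 1 with hS
    have hrank_le : (U - 1).rank ≤ d + 2 := by
      have hdec : U - 1
          = Matrix.vecMulVec (fun i => ‖v i‖ ^ 2) (fun _ => (1:ℝ))
            + Matrix.vecMulVec (fun _ => (1:ℝ)) (fun j => ‖v j‖ ^ 2 - 1)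
            + (Matrix.of fun (i : Fin n) (k : Fin d) => (-2) * v i k)
              * (Matrix.of fun (k : Fin d) (j : Fin n) => v j k) := by
        ext i j
        have lhs : (U - 1) i j = ‖v i - v j‖ ^ 2 - 1 := by
          rw [hUdef]
          simp only [Matrix.sub_apply, Matrix.add_apply, Matrix.of_apply, hVdef]
          ring
        rw [lhs, norm_sub_sq_real, hinner i j]
        simp only [Matrix.add_apply, Matrix.mul_apply, Matrix.vecMulVec_apply, Matrix.of_apply]
        simp only [mul_assoc, ← Finset.mul_sum]
        ring
      rw [hdec]
      refine le_trans (myrank_add _ _) ?_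
      have r3 : ((Matrix.of fun (i : Fin n) (k : Fin d) => (-2) * v i k)
          * (Matrix.of fun (k : Fin d) (j : Fin n) => v j k)).rank ≤ d := by
        refine le_trans (Matrix.rank_mul_le_left _ _) ?_
        simpa using Matrix.rank_le_card_width (Matrix.of fun (i : Fin n) (k : Fin d) => (-2) * v i k)
      have r12 : (Matrix.vecMulVec (fun i => ‖v i‖ ^ 2) (fun _ => (1:ℝ))
          + Matrix.vecMulVec (fun _ => (1:ℝ)) (fun j => ‖v j‖ ^ 2 - 1)).rank ≤ 2 := by
        refine le_trans (myrank_add _ _) ?_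
        have := myrank_vmv (n := n) (fun i => ‖v i‖ ^ 2) (fun _ => (1:ℝ))
        have := myrank_vmv (n := n) (fun _ => (1:ℝ)) (fun j => ‖v j‖ ^ 2 - 1)
        omega
      omega
    have hrank_ge : n - S.card ≤ (U - 1).rank := by
      have hindep : LinearIndependent ℝ (fun i : (Sᶜ : Finset (Fin n)) => (⇑(b i) : Fin n → ℝ)) := by
        have h := hU.eigenvectorBasis.toBasis.linearIndependent
        rw [OrthonormalBasis.coe_toBasis] at h
        have h2 := h.map' (WithLp.linearEquiv 2 ℝ (Fin n → ℝ)).toLinearMap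
          (LinearEquiv.ker (WithLp.linearEquiv 2 ℝ (Fin n → ℝ)))
        exact h2.comp Subtype.val Subtype.val_injective
      have hmem : ∀ i : (Sᶜ : Finset (Fin n)),
          (⇑(b i) : Fin n → ℝ) ∈ LinearMap.range (U - 1).mulVecLin := by
        rintro ⟨i, hi⟩
        have hi' : lam i ≠ 1 := by
          simpa [hS] using (Finset.mem_compl.mp hi)
        refine ⟨(lam i - 1)⁻¹ • ⇑(b i), ?_⟩
        rw [Matrix.mulVecLin_apply, Matrix.mulVec_smul, Matrix.sub_mulVec, Matrix.one_mulVec,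
          hU.mulVec_eigenvectorBasis]
        have hsub : lam i • (⇑(b i) : Fin n → ℝ) - ⇑(b i) = (lam i - 1) • (⇑(b i) : Fin n → ℝ) := by
          rw [sub_smul, one_smul]
        rw [hsub, smul_smul,
          inv_mul_cancel₀ (by intro h; apply hi'; linarith [sub_eq_zero.mp h]), one_smul]
      have hspan : Submodule.span ℝ (Set.range fun i : (Sᶜ : Finset (Fin n)) => (⇑(b i) : Fin n → ℝ))
          ≤ LinearMap.range (U - 1).mulVecLin := by
        rw [Submodule.span_le]
        rintro _ ⟨i, rfl⟩
        exact hmem i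
      have hfr := finrank_span_eq_card hindep
      have : (Sᶜ : Finset (Fin n)).card ≤ (U - 1).rank := by
        rw [Matrix.rank]
        calc (Sᶜ : Finset (Fin n)).card
            = Module.finrank ℝ (Submodule.span ℝ
                (Set.range fun i : (Sᶜ : Finset (Fin n)) => (⇑(b i) : Fin n → ℝ))) := by
              rw [hfr, Fintype.card_coe]
          _ ≤ _ := Submodule.finrank_mono hspan
      rwa [Finset.card_compl, Fintype.card_fin] at this
    omega
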